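/- Let (W_i)_{i∈ℕ} be independent, identically distributed, strongly measurable 𝔻-valued random variables with E‖W₁‖ < ∞. Fix an integer K ≥ 1. For each n ≥ K let {1, …, n} = J^n_1 ∪ ⋯ ∪ J^n_K be a partition into pairwise disjoint sets with |J^n_k| ∈ {⌊n/K⌋, ⌈n/K⌉} for each k. Set S_n := n⁻¹·Σ_{i=1}^n W_i and S_{n,k} := |J^n_k|⁻¹·Σ_{i ∈ J^n_k} W_i. Then for every real r < 1, n^r · E‖ K⁻¹·Σ_{k=1}^K S_{n,k} − S_n ‖ → 0 as n → ∞. -/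

import Mathlib

open MeasureTheory ProbabilityTheory Filter Topology

/-- **Cross-fitting aggregation lemma in Banach spaces.** For i.i.d. integrable `𝔻`-valued
random variables and `K`-fold partitions of `{0, …, n−1}` into folds of size `⌊n/K⌋` or
`⌈n/K⌉`, the average of the fold-wise empirical means differs from the full empirical mean
by `o(n^{−r})` in mean, for every `r < 1`. -/
theorem crossfit_aggregation
    {Ω 𝔻 : Type*} [MeasurableSpace Ω] (P : Measure Ω) [IsProbabilityMeasure P]
    [NormedAddCommGroup 𝔻] [NormedSpace ℝ 𝔻] [CompleteSpace 𝔻]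
    [MeasurableSpace 𝔻] [BorelSpace 𝔻]
    (W : ℕ → Ω → 𝔻)
    (hmeas : ∀ i, StronglyMeasurable (W i))
    (hindep : iIndepFun W P)
    (hident : ∀ i, IdentDistrib (W i) (W 0) P P)
    (hint : Integrable (W 0) P)
    (K : ℕ) (hK : 1 ≤ K)
    (J : ℕ → Fin K → Finset ℕ)
    (hdisj : ∀ n, K ≤ n → ∀ k l : Fin K, k ≠ l → Disjoint (J n k) (J n l))
    (hunion : ∀ n, K ≤ n → (Finset.univ.biUnion fun k => J n k) = Finset.range n)
    (hcard : ∀ n, K ≤ n → ∀ k,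
      (J n k).card = n / K ∨ (J n k).card = Nat.ceil ((n : ℚ) / (K : ℚ))) :
    ∀ r : ℝ, r < 1 →
      Tendsto (fun n : ℕ => (n : ℝ) ^ r *
        ∫ ω, ‖(K : ℝ)⁻¹ • (∑ k : Fin K, ((J n k).card : ℝ)⁻¹ • ∑ i ∈ J n k, W i ω)
          - (n : ℝ)⁻¹ • ∑ i ∈ Finset.range n, W i ω‖ ∂P) atTop (𝓝 0) := by
  intro r hr
  have hWint : ∀ i, Integrable (W i) P := fun i => (hident i).integrable_iff.mpr hint
  set M := ∫ ω, ‖W 0 ω‖ ∂P with hM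
  have hMnonneg : 0 ≤ M := integral_nonneg fun ω => norm_nonneg _
  have hnormint : ∀ i, ∫ ω, ‖W i ω‖ ∂P = M := fun i => ((hident i).norm).integral_eq
  -- key integral bound for n ≥ K
  have key : ∀ n : ℕ, K ≤ n →
      (∫ ω, ‖(K : ℝ)⁻¹ • (∑ k : Fin K, ((J n k).card : ℝ)⁻¹ • ∑ i ∈ J n k, W i ω)
        - (n : ℝ)⁻¹ • ∑ i ∈ Finset.range n, W i ω‖ ∂P) ≤ K * M / n := by
    intro n hn
    have hnpos : (0 : ℝ) < n := by
      have : 0 < n := lt_of_lt_of_le hK hn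
      exact_mod_cast this
    have hKpos : (0 : ℝ) < K := by exact_mod_cast hK
    set c : Fin K → ℝ := fun k => (K : ℝ)⁻¹ * ((J n k).card : ℝ)⁻¹ - (n : ℝ)⁻¹ with hc
    -- cardinality bounds
    have hcard_pos : ∀ k, 0 < (J n k).card := by
      intro k
      rcases hcard n hn k with h | h
      · rw [h]; exact Nat.div_pos hn (lt_of_lt_of_le Nat.zero_lt_one hK)
      · rw [h]
        rw [Nat.ceil_pos]
        exact div_pos (by exact_mod_cast lt_of_lt_of_le (lt_of_lt_of_le Nat.zero_lt_one hK) hn)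
          (by exact_mod_cast lt_of_lt_of_le Nat.zero_lt_one hK)
    have hcoef : ∀ k, |c k| * ((J n k).card : ℝ) ≤ 1 / n := by
      intro k
      set m : ℕ := (J n k).card with hm
      have hmpos : (0 : ℝ) < m := by exact_mod_cast hcard_pos k
      have habs : |(n : ℝ) - K * m| ≤ K := by
        rcases hcard n hn k with h | h
        · have h1 : K * m ≤ n := by rw [hm, h]; exact Nat.mul_div_le n K
          have h2 : n < K * m + K := by
            rw [hm, h]
            have hd := Nat.div_add_mod n K
            have hmod : n % K < K := Nat.mod_lt n (lt_of_lt_of_le Nat.zero_lt_one hK)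
            omega
          have h1' : (K : ℝ) * m ≤ n := by exact_mod_cast h1
          have h2' : (n : ℝ) < K * m + K := by exact_mod_cast h2
          rw [abs_le]; constructor <;> linarith
        · have hq : ((n : ℚ) / K) ≤ m := by rw [hm, h]; exact_mod_cast Nat.le_ceil _
          have hKQ : (0 : ℚ) < K := by exact_mod_cast hK
          have hq2 : (m : ℚ) < (n : ℚ) / K + 1 := by
            rw [hm, h]
            exact_mod_cast Nat.ceil_lt_add_one (le_of_lt (div_pos (by exact_mod_cast lt_of_lt_of_le (lt_of_lt_of_le Nat.zero_lt_one hK) hn) hKQ))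
          have hid : (K : ℚ) * ((n : ℚ) / K) = n := by field_simp
          have h1 : (n : ℚ) ≤ K * m := by
            have := mul_le_mul_of_nonneg_left hq (le_of_lt hKQ)
            linarith [hid]
          have h2 : (K : ℚ) * m < n + K := by
            have := mul_lt_mul_of_pos_left hq2 hKQ
            nlinarith [hid]
          have h1' : (n : ℝ) ≤ K * m := by exact_mod_cast h1
          have h2' : (K : ℝ) * m < n + K := by exact_mod_cast h2
          rw [abs_le]; constructor <;> linarith
      have hcval : c k = ((n : ℝ) - K * m) / (K * m * n) := by
        simp only [hc, ← hm]
        field_simp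
        try ring
      have hce : |c k| * (m : ℝ) = |(n : ℝ) - K * m| / (K * n) := by
        rw [hcval, abs_div, abs_of_pos (by positivity : (0:ℝ) < (K:ℝ) * m * n)]
        field_simp
        try ring
      rw [hce, div_le_div_iff₀ (by positivity) hnpos]
      nlinarith [habs, hnpos, abs_nonneg ((n : ℝ) - K * m)]
    -- pointwise rewriting
    have hrange : ∀ ω, ∑ i ∈ Finset.range n, W i ω = ∑ k : Fin K, ∑ i ∈ J n k, W i ω := by
      intro ω
      rw [← hunion n hn]
      rw [Finset.sum_biUnion]
      intro k _ l _ hkl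
      exact hdisj n hn k l hkl
    have hpt : ∀ ω, (K : ℝ)⁻¹ • (∑ k : Fin K, ((J n k).card : ℝ)⁻¹ • ∑ i ∈ J n k, W i ω)
        - (n : ℝ)⁻¹ • ∑ i ∈ Finset.range n, W i ω
        = ∑ k : Fin K, c k • ∑ i ∈ J n k, W i ω := by
      intro ω
      rw [hrange ω, Finset.smul_sum, Finset.smul_sum, ← Finset.sum_sub_distrib]
      refine Finset.sum_congr rfl fun k _ => ?_
      rw [smul_smul, ← sub_smul]
    have hptbound : ∀ ω, ‖(K : ℝ)⁻¹ • (∑ k : Fin K, ((J n k).card : ℝ)⁻¹ • ∑ i ∈ J n k, W i ω)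
        - (n : ℝ)⁻¹ • ∑ i ∈ Finset.range n, W i ω‖
        ≤ ∑ k : Fin K, |c k| * ∑ i ∈ J n k, ‖W i ω‖ := by
      intro ω
      rw [hpt ω]
      refine (norm_sum_le _ _).trans (Finset.sum_le_sum fun k _ => ?_)
      rw [norm_smul, Real.norm_eq_abs]
      exact mul_le_mul_of_nonneg_left (norm_sum_le _ _) (abs_nonneg _)
    -- integrability
    have hgint : Integrable (fun ω => ∑ k : Fin K, |c k| * ∑ i ∈ J n k, ‖W i ω‖) P := by
      apply integrable_finset_sum
      intro k _
      exact (integrable_finset_sum _ fun i _ => (hWint i).norm).const_mul _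
    have hXint : Integrable (fun ω => (K : ℝ)⁻¹ • (∑ k : Fin K, ((J n k).card : ℝ)⁻¹ • ∑ i ∈ J n k, W i ω)
        - (n : ℝ)⁻¹ • ∑ i ∈ Finset.range n, W i ω) P := by
      apply Integrable.sub
      · exact ((integrable_finset_sum _ fun k _ => ((integrable_finset_sum _ fun i _ => hWint i).smul _)).smul _)
      · exact ((integrable_finset_sum _ fun i _ => hWint i).smul _)
    calc (∫ ω, ‖(K : ℝ)⁻¹ • (∑ k : Fin K, ((J n k).card : ℝ)⁻¹ • ∑ i ∈ J n k, W i ω)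
          - (n : ℝ)⁻¹ • ∑ i ∈ Finset.range n, W i ω‖ ∂P)
        ≤ ∫ ω, ∑ k : Fin K, |c k| * ∑ i ∈ J n k, ‖W i ω‖ ∂P :=
          integral_mono hXint.norm hgint hptbound
      _ = ∑ k : Fin K, |c k| * (((J n k).card : ℝ) * M) := by
          rw [integral_finset_sum _ fun k _ =>
            (integrable_finset_sum _ fun i _ => (hWint i).norm).const_mul _]
          refine Finset.sum_congr rfl fun k _ => ?_
          rw [integral_const_mul, integral_finset_sum _ fun i _ => (hWint i).norm]
          congr 1
          rw [Finset.sum_congr rfl fun i _ => hnormint i, Finset.sum_const, nsmul_eq_mul]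
      _ ≤ ∑ k : Fin K, (1 / n) * M := by
          refine Finset.sum_le_sum fun k _ => ?_
          rw [← mul_assoc]
          exact mul_le_mul_of_nonneg_right (hcoef k) hMnonneg
      _ = K * M / n := by
          rw [Finset.sum_const, Finset.card_univ, Fintype.card_fin, nsmul_eq_mul]
          ring
  -- squeeze
  have h0 : ∀ n : ℕ, 0 ≤ (n : ℝ) ^ r *
      ∫ ω, ‖(K : ℝ)⁻¹ • (∑ k : Fin K, ((J n k).card : ℝ)⁻¹ • ∑ i ∈ J n k, W i ω)
        - (n : ℝ)⁻¹ • ∑ i ∈ Finset.range n, W i ω‖ ∂P := fun n =>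
    mul_nonneg (Real.rpow_nonneg (Nat.cast_nonneg n) r) (integral_nonneg fun ω => norm_nonneg _)
  have hub : ∀ᶠ n : ℕ in atTop, (n : ℝ) ^ r *
      (∫ ω, ‖(K : ℝ)⁻¹ • (∑ k : Fin K, ((J n k).card : ℝ)⁻¹ • ∑ i ∈ J n k, W i ω)
        - (n : ℝ)⁻¹ • ∑ i ∈ Finset.range n, W i ω‖ ∂P) ≤ (K * M) * (n : ℝ) ^ (r - 1) := by
    filter_upwards [eventually_ge_atTop K, eventually_ge_atTop 1] with n hn h1
    have hnpos : (0 : ℝ) < n := by exact_mod_cast lt_of_lt_of_le Nat.zero_lt_one h1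
    have := mul_le_mul_of_nonneg_left (key n hn) (Real.rpow_nonneg (Nat.cast_nonneg n) r)
    refine this.trans_eq ?_
    rw [Real.rpow_sub hnpos, Real.rpow_one]
    field_simp
  have hlim : Tendsto (fun n : ℕ => (K * M) * (n : ℝ) ^ (r - 1)) atTop (𝓝 0) := by
    have h1 : Tendsto (fun x : ℝ => x ^ (r - 1)) atTop (𝓝 0) := by
      have : Tendsto (fun x : ℝ => x ^ (-(1 - r))) atTop (𝓝 0) :=
        tendsto_rpow_neg_atTop (by linarith)
      simpa [neg_sub] using this
    have h2 : Tendsto (fun n : ℕ => ((n : ℝ)) ^ (r - 1)) atTop (𝓝 0) :=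
      h1.comp tendsto_natCast_atTop_atTop
    simpa using h2.const_mul (K * M)
  exact squeeze_zero' (Eventually.of_forall h0) hub hlim
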